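/- Suppose α₁, α₂, α₃, α₄, β₀,…,β_{n−1}, γ₁,…,γ_{n−1} are real numbers with α₁ + α₂ + α₃ + α₄ + 4Σⱼβⱼ + 4Σₖγₖ = 0, and T is a real number such that (α₁−α₂)T, (α₁−α₃)T, (α₁−α₄)T, (α₁−βⱼ)T − 1/2 for all j, and (α₁−γₖ)T for all k are integers. If α₁ is a positive integer, then T is rational. -/

import Mathlib

theorem stmt_13 (n : ℕ) (hn : 0 < n)
    (α₁ α₂ α₃ α₄ : ℝ) (β γ : Fin n → ℝ)
    (htrace : α₁ + α₂ + α₃ + α₄ + 4 * ∑ j, β j + 4 * ∑ k, γ k = 0)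
    (T : ℝ)
    (h2 : ∃ z : ℤ, (α₁ - α₂) * T = z)
    (h3 : ∃ z : ℤ, (α₁ - α₃) * T = z)
    (h4 : ∃ z : ℤ, (α₁ - α₄) * T = z)
    (hβ : ∀ j, ∃ z : ℤ, (α₁ - β j) * T - 1 / 2 = z)
    (hγ : ∀ k, ∃ z : ℤ, (α₁ - γ k) * T = z)
    (hα₁ : ∃ m : ℕ, 0 < m ∧ α₁ = m) :
    ∃ q : ℚ, T = q := by
  obtain ⟨z2, h2⟩ := h2
  obtain ⟨z3, h3⟩ := h3
  obtain ⟨z4, h4⟩ := h4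
  choose zβ hzβ using hβ
  choose zγ hzγ using hγ
  obtain ⟨m, hm, hα⟩ := hα₁
  -- sum versions
  have eβ : (α₁ * n - ∑ j, β j) * T = (∑ j, (zβ j : ℝ)) + n / 2 := by
    have : ∑ j, ((α₁ - β j) * T) = ∑ j : Fin n, ((zβ j : ℝ) + 1 / 2) :=
      Finset.sum_congr rfl fun j _ => by linarith [hzβ j]
    rw [← Finset.sum_mul] at this
    simp [Finset.sum_sub_distrib, Finset.sum_add_distrib, Finset.sum_const,
      Finset.card_univ] at this
    linarith [this]
  have eγ : (α₁ * n - ∑ k, γ k) * T = (∑ k, (zγ k : ℝ)) := by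
    have : ∑ k, ((α₁ - γ k) * T) = ∑ k : Fin n, ((zγ k : ℝ)) :=
      Finset.sum_congr rfl fun k _ => hzγ k
    rw [← Finset.sum_mul] at this
    simp [Finset.sum_sub_distrib, Finset.sum_const, Finset.card_univ] at this
    linarith [this]
  have key : ((8 * n + 4 : ℕ) * m : ℝ) * T
      = ((z2 + z3 + z4 + 4 * ∑ j, zβ j + 2 * n + 4 * ∑ k, zγ k : ℤ) : ℝ) := by
    push_cast
    rw [← hα]
    linear_combination h2 + h3 + h4 + 4 * eβ + 4 * eγ + T * htrace
  have hd : ((8 * n + 4 : ℕ) * m : ℝ) ≠ 0 := by positivity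
  refine ⟨((z2 + z3 + z4 + 4 * ∑ j, zβ j + 2 * n + 4 * ∑ k, zγ k : ℤ) : ℚ)
    / ((8 * n + 4 : ℕ) * m : ℚ), ?_⟩
  have : T = ((z2 + z3 + z4 + 4 * ∑ j, zβ j + 2 * n + 4 * ∑ k, zγ k : ℤ) : ℝ)
      / ((8 * n + 4 : ℕ) * m : ℝ) := by
    field_simp
    push_cast at key ⊢
    linarith [key]
  rw [this]
  push_cast
  ring
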